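/- Let S be the monoid presented by generators a_0, a_1, a_2, … subject to the relations a_i a_j = a_{j+1} a_i for all i ≤ j, regarded as a right S-act over itself by right multiplication. Then every S-map h : S → S is injective. -/

import Mathlib

/-- The defining relations of Kruml's monoid: `aᵢ aⱼ = a_{j+1} aᵢ` for all `i ≤ j`,
as a relation on the free monoid on `ℕ`. -/
inductive KrumlRel : FreeMonoid ℕ → FreeMonoid ℕ → Prop
  | rel (i j : ℕ) : i ≤ j →
      KrumlRel (FreeMonoid.of i * FreeMonoid.of j) (FreeMonoid.of (j + 1) * FreeMonoid.of i)

/-- Kruml's monoid `S = ⟨a₀, a₁, a₂, … ∣ aᵢaⱼ = a_{j+1}aᵢ for i ≤ j⟩`: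
the quotient of the free monoid on `ℕ` by the congruence generated by the relations. -/
abbrev KrumlMonoid : Type := (conGen KrumlRel).Quotient

/-- Left-insert a generator into a (normal form) list. -/
def lins (i : ℕ) : List ℕ → List ℕ
  | [] => [i]
  | p :: t => if i > p then i :: p :: t else (p + 1) :: lins i t

lemma lins_ne_nil (i : ℕ) (l : List ℕ) : lins i l ≠ [] := by
  cases l with
  | nil => simp [lins]
  | cons p t => simp only [lins]; split <;> simp

lemma lins_braid {i j : ℕ} (hij : i ≤ j) (l : List ℕ) :
    lins i (lins j l) = lins (j + 1) (lins i l) := by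
  induction l with
  | nil =>
      simp only [lins]
      rw [if_neg (by omega), if_pos (by omega)]
  | cons p t ih =>
      by_cases hjp : j > p
      · have hi : ¬ i > j := by omega
        rw [show lins j (p :: t) = j :: p :: t from if_pos hjp]
        rw [show lins i (j :: p :: t) = (j+1) :: lins i (p :: t) from if_neg hi]
        cases hr : lins i (p :: t) with
        | nil => exact absurd hr (lins_ne_nil _ _)
        | cons q s =>
            have hq : q = i ∨ q = p + 1 := by
              simp only [lins] at hr; split at hr <;>
                · injection hr with h1 _; omega
            have : j + 1 > q := by omega
            rw [show lins (j+1) (q :: s) = (j+1) :: q :: s from if_pos this, ← hr]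
      · have hip : ¬ i > p := by omega
        rw [show lins j (p :: t) = (p+1) :: lins j t from if_neg (by omega)]
        rw [show lins i ((p+1) :: lins j t) = (p+2) :: lins i (lins j t) from if_neg (by omega)]
        rw [show lins i (p :: t) = (p+1) :: lins i t from if_neg hip]
        rw [show lins (j+1) ((p+1) :: lins i t) = (p+2) :: lins (j+1) (lins i t) from
          if_neg (by omega)]
        rw [ih]

lemma lins_length (i : ℕ) (l : List ℕ) : (lins i l).length = l.length + 1 := by
  induction l generalizing i with
  | nil => rfl
  | cons p t ih =>
      simp only [lins]; split
      · rfl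
      · simp [ih]

lemma lins_injective (i : ℕ) : Function.Injective (lins i) := by
  intro l1 l2 h
  induction l1 generalizing l2 with
  | nil =>
      cases l2 with
      | nil => rfl
      | cons q s =>
          have := congrArg List.length h
          rw [lins_length, lins_length] at this
          simp at this
  | cons p t ih =>
      cases l2 with
      | nil =>
          have := congrArg List.length h
          rw [lins_length, lins_length] at this
          simp at this
      | cons q s =>
          simp only [lins] at h
          by_cases h1 : i > p <;> by_cases h2 : i > q
          · rw [if_pos h1, if_pos h2] at h; simp_all
          · rw [if_pos h1, if_neg h2] at h; injection h with ha _; omega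
          · rw [if_neg h1, if_pos h2] at h; injection h with ha _; omega
          · rw [if_neg h1, if_neg h2] at h
            injection h with ha hb
            have : p = q := by omega
            subst this
            rw [ih hb]

/-- The action homomorphism into `Function.End`. -/
noncomputable def Aact : FreeMonoid ℕ →* Function.End (List ℕ) :=
  FreeMonoid.lift (fun i => (lins i : Function.End (List ℕ)))

lemma Aact_of (i : ℕ) : Aact (FreeMonoid.of i) = lins i :=
  FreeMonoid.lift_eval_of _ i

lemma conGen_le_ker : conGen KrumlRel ≤ Con.ker Aact := by
  apply Con.conGen_le.mpr
  intro x y hxy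
  cases hxy with
  | rel i j hij =>
      show Aact _ = Aact _
      simp only [map_mul, Aact_of]
      funext l
      exact lins_braid hij l

/-- The lifted homomorphism on the quotient. -/
noncomputable def Bact : KrumlMonoid →* Function.End (List ℕ) :=
  Con.lift _ Aact conGen_le_ker

lemma Aact_ofList_injective (l : List ℕ) : Function.Injective (Aact (FreeMonoid.ofList l)) := by
  induction l with
  | nil => exact fun a b h => h
  | cons p t ih =>
      have : FreeMonoid.ofList (p :: t) = FreeMonoid.of p * FreeMonoid.ofList t := rfl
      rw [this, map_mul, Aact_of]
      exact (lins_injective p).comp ih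

lemma Aact_injective (w : FreeMonoid ℕ) : Function.Injective (Aact w) := by
  have := Aact_ofList_injective w.toList
  rwa [FreeMonoid.ofList_toList] at this

/-- Completeness: every word is congruent to its normal form. -/
lemma complete_of_mul (i : ℕ) (l : List ℕ) :
    conGen KrumlRel (FreeMonoid.of i * FreeMonoid.ofList l) (FreeMonoid.ofList (lins i l)) := by
  induction l generalizing i with
  | nil => exact (conGen KrumlRel).refl _
  | cons p t ih =>
      by_cases hip : i > p
      · rw [show lins i (p :: t) = i :: p :: t from if_pos hip]
        exact (conGen KrumlRel).refl _
      · rw [show lins i (p :: t) = (p+1) :: lins i t from if_neg hip]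
        have h1 : conGen KrumlRel (FreeMonoid.of i * FreeMonoid.of p)
            (FreeMonoid.of (p+1) * FreeMonoid.of i) :=
          ConGen.Rel.of _ _ (KrumlRel.rel i p (by omega))
        have h2 : conGen KrumlRel
            (FreeMonoid.of i * FreeMonoid.of p * FreeMonoid.ofList t)
            (FreeMonoid.of (p+1) * FreeMonoid.of i * FreeMonoid.ofList t) :=
          (conGen KrumlRel).mul h1 ((conGen KrumlRel).refl _)
        have h3 : conGen KrumlRel
            (FreeMonoid.of (p+1) * (FreeMonoid.of i * FreeMonoid.ofList t))
            (FreeMonoid.of (p+1) * FreeMonoid.ofList (lins i t)) :=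
          (conGen KrumlRel).mul ((conGen KrumlRel).refl _) (ih i)
        have e1 : FreeMonoid.of i * FreeMonoid.ofList (p :: t)
            = FreeMonoid.of i * FreeMonoid.of p * FreeMonoid.ofList t := rfl
        have e2 : FreeMonoid.ofList ((p+1) :: lins i t)
            = FreeMonoid.of (p+1) * FreeMonoid.ofList (lins i t) := rfl
        rw [e1, e2]
        exact (conGen KrumlRel).trans h2 (by rw [mul_assoc] at *; exact h3)

lemma complete (w : FreeMonoid ℕ) :
    conGen KrumlRel w (FreeMonoid.ofList (Aact w [])) := by
  have key : ∀ l : List ℕ, conGen KrumlRel (FreeMonoid.ofList l)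
      (FreeMonoid.ofList (Aact (FreeMonoid.ofList l) [])) := by
    intro l
    induction l with
    | nil => exact (conGen KrumlRel).refl _
    | cons p t ih =>
        have e : FreeMonoid.ofList (p :: t) = FreeMonoid.of p * FreeMonoid.ofList t := rfl
        have eA : Aact (FreeMonoid.ofList (p :: t)) [] = lins p (Aact (FreeMonoid.ofList t) []) := by
          rw [e, map_mul, Aact_of]; rfl
        rw [eA, e]
        refine (conGen KrumlRel).trans ?_ (complete_of_mul p _)
        exact (conGen KrumlRel).mul ((conGen KrumlRel).refl _) ih
  have := key w.toList
  rwa [FreeMonoid.ofList_toList] at this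

/-- Every `S`-map `h : S → S` (where `S` acts on itself by right multiplication,
so the `S`-map condition is `h (x * s) = h x * s`) is injective. -/
theorem krumlMonoid_sMap_injective (h : KrumlMonoid → KrumlMonoid)
    (hmap : ∀ x s : KrumlMonoid, h (x * s) = h x * s) :
    Function.Injective h := by
  intro x y hxy
  have hx : h x = h 1 * x := by rw [← hmap 1 x, one_mul]
  have hy : h y = h 1 * y := by rw [← hmap 1 y, one_mul]
  have hcc : h 1 * x = h 1 * y := by rw [← hx, ← hy, hxy]
  -- pass to representatives
  obtain ⟨wx, rfl⟩ := Con.mk'_surjective x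
  obtain ⟨wy, rfl⟩ := Con.mk'_surjective y
  obtain ⟨wc, hwc⟩ := Con.mk'_surjective (h 1)
  rw [← hwc, ← map_mul, ← map_mul] at hcc
  have hA : Aact (wc * wx) = Aact (wc * wy) :=
    conGen_le_ker ((Con.eq _).mp hcc)
  have hlist : Aact wx [] = Aact wy [] := by
    have h1 : Aact wc (Aact wx []) = Aact wc (Aact wy []) := by
      have e1 : Aact wc (Aact wx []) = Aact (wc * wx) [] := by rw [map_mul]; rfl
      have e2 : Aact wc (Aact wy []) = Aact (wc * wy) [] := by rw [map_mul]; rfl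
      rw [e1, e2, hA]
    exact Aact_injective wc h1
  have hw : conGen KrumlRel wx wy := by
    refine (conGen KrumlRel).trans (complete wx) ?_
    rw [hlist]
    exact (conGen KrumlRel).symm (complete wy)
  exact (Con.eq _).mpr hw
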